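/- arXiv:1602.01587 — 2 statements merged into one kernel-verified Lean document; each statement's English description precedes it below -/
import Mathlib

section
/- Let X be a separable metrizable topological space. Then M (the space of finite signed Borel measures on X) equipped with the quotient topology T is a k-space (compactly generated topological space): a subset A ⊆ M is T-closed if and only if A ∩ K is T-closed for every T-compact subset K ⊆ M. -/
open MeasureTheory TopologicalSpace Topology

noncomputable def sPair {X : Type*} [TopologicalSpace X] [MeasurableSpace X]
    (μ : SignedMeasure X) (f : BoundedContinuousFunction X ℝ) : ℝ :=
  (∫ x, f x ∂μ.toJordanDecomposition.posPart) - ∫ x, f x ∂μ.toJordanDecomposition.negPart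

/-- The weak topology σ on the space of finite signed Borel measures, induced by
integration against bounded continuous functions. -/
noncomputable def sigmaTop (X : Type*) [TopologicalSpace X] [MeasurableSpace X] :
    TopologicalSpace (SignedMeasure X) :=
  ⨅ f : BoundedContinuousFunction X ℝ,
    TopologicalSpace.induced (fun μ => sPair μ f) inferInstance

/-- The map q(μ,ν) = μ - ν from pairs of finite nonnegative measures to signed measures. -/
noncomputable def qMap (X : Type*) [TopologicalSpace X] [MeasurableSpace X] :
    FiniteMeasure X × FiniteMeasure X → SignedMeasure X :=
  fun p => p.1.toMeasure.toSignedMeasure - p.2.toMeasure.toSignedMeasure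

/-- The quotient topology T coinduced by q from the (product of the) weak-convergence
topology on pairs of finite nonnegative measures. -/
noncomputable def TTop (X : Type*) [TopologicalSpace X] [MeasurableSpace X]
    [OpensMeasurableSpace X] : TopologicalSpace (SignedMeasure X) :=
  TopologicalSpace.coinduced (qMap X) inferInstance

open scoped NNReal ENNReal
open BoundedContinuousFunction

lemma topologies_eq_of_subsingleton {α : Type*} [Subsingleton α]
    (t₁ t₂ : TopologicalSpace α) : t₁ = t₂ := by
  apply TopologicalSpace.ext
  ext s
  rcases s.eq_empty_or_nonempty with rfl | ⟨a, ha⟩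
  · simp
  · have : s = Set.univ := Set.eq_univ_of_forall fun x => (Subsingleton.elim a x) ▸ ha
    simp [this]

lemma continuous_into_finiteMeasure {α Z : Type*} [TopologicalSpace α] [MeasurableSpace α]
    [OpensMeasurableSpace α] [TopologicalSpace Z] {g : Z → FiniteMeasure α}
    (h : ∀ f : α →ᵇ ℝ≥0, Continuous fun z => (g z).testAgainstNN f) : Continuous g := by
  apply continuous_induced_rng.mpr
  exact WeakBilin.continuous_of_continuous_eval _ h

section Nrm

variable {α : Type*} [TopologicalSpace α] [MeasurableSpace α] [OpensMeasurableSpace α]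

noncomputable def nrm (x₀ : α) (μ : FiniteMeasure α) : ProbabilityMeasure α :=
  ⟨(((1 + μ.mass : ℝ≥0)) : ℝ≥0∞)⁻¹ • (μ.toMeasure + Measure.dirac x₀), by
    constructor
    rw [Measure.smul_apply, Measure.add_apply, ← FiniteMeasure.ennreal_mass,
      Measure.dirac_apply_of_mem (Set.mem_univ x₀), smul_eq_mul]
    have : (μ.mass : ℝ≥0∞) + 1 = ((1 + μ.mass : ℝ≥0) : ℝ≥0∞) := by push_cast; ring
    rw [this, ENNReal.inv_mul_cancel (by simp) (by simp)]⟩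

lemma nrm_testAgainstNN (x₀ : α) (μ : FiniteMeasure α) (f : α →ᵇ ℝ≥0) :
    (nrm x₀ μ).toFiniteMeasure.testAgainstNN f
      = (1 + μ.mass)⁻¹ * (μ.testAgainstNN f + f x₀) := by
  have hf : Measurable fun x => (f x : ℝ≥0∞) :=
    measurable_coe_nnreal_ennreal.comp f.continuous.measurable
  have key : ∫⁻ x, f x ∂((nrm x₀ μ).toFiniteMeasure : Measure α)
      = (((1 + μ.mass : ℝ≥0)) : ℝ≥0∞)⁻¹ * ((∫⁻ x, f x ∂(μ : Measure α)) + f x₀) := by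
    rw [show ((nrm x₀ μ).toFiniteMeasure : Measure α)
        = (((1 + μ.mass : ℝ≥0)) : ℝ≥0∞)⁻¹ • (μ.toMeasure + Measure.dirac x₀) from rfl,
      lintegral_smul_measure, lintegral_add_measure, lintegral_dirac' _ hf, smul_eq_mul]
  show (∫⁻ x, f x ∂((nrm x₀ μ).toFiniteMeasure : Measure α)).toNNReal = _
  rw [key, ENNReal.toNNReal_mul,
    ENNReal.toNNReal_add (f.lintegral_lt_top_of_nnreal (μ : Measure α)).ne ENNReal.coe_ne_top,
    ← ENNReal.coe_inv (by simp), ENNReal.toNNReal_coe, ENNReal.toNNReal_coe]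
  rfl

lemma testAgainstNN_eq_nrm (x₀ : α) (μ : FiniteMeasure α) (f : α →ᵇ ℝ≥0) :
    μ.testAgainstNN f
      = (1 + μ.mass) * ((nrm x₀ μ).toFiniteMeasure.testAgainstNN f) - f x₀ := by
  rw [nrm_testAgainstNN, ← mul_assoc,
    mul_inv_cancel₀ (a := 1 + μ.mass) (by positivity), one_mul, add_tsub_cancel_right]

lemma isInducing_nrm (x₀ : α) :
    IsInducing (fun μ : FiniteMeasure α => ((μ.mass, nrm x₀ μ) : ℝ≥0 × ProbabilityMeasure α)) := by
  constructor
  refine le_antisymm ?_ ?_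
  · rw [← continuous_iff_le_induced]
    refine Continuous.prodMk FiniteMeasure.continuous_mass ?_
    apply continuous_induced_rng.mpr
    apply continuous_into_finiteMeasure
    intro f
    have hc : Continuous fun μ : FiniteMeasure α => (1 + μ.mass)⁻¹ :=
      (continuous_const.add FiniteMeasure.continuous_mass).inv₀
        fun μ => (add_pos_of_pos_of_nonneg one_pos zero_le).ne'
    have : (fun μ : FiniteMeasure α => ((nrm x₀ μ).toFiniteMeasure.testAgainstNN f))
        = fun μ => (1 + μ.mass)⁻¹ * (μ.testAgainstNN f + f x₀) :=
      funext fun μ => nrm_testAgainstNN x₀ μ f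
    exact this ▸ hc.mul ((FiniteMeasure.continuous_testAgainstNN_eval f).add continuous_const)
  · letI t : TopologicalSpace (FiniteMeasure α) :=
      TopologicalSpace.induced
        (fun μ : FiniteMeasure α => ((μ.mass, nrm x₀ μ) : ℝ≥0 × ProbabilityMeasure α))
        inferInstance
    show t ≤ _
    rw [show (FiniteMeasure.instTopologicalSpace : TopologicalSpace (FiniteMeasure α))
      = TopologicalSpace.induced FiniteMeasure.toWeakDualBCNN inferInstance from rfl]
    rw [← continuous_iff_le_induced]
    refine WeakBilin.continuous_of_continuous_eval _ fun f => ?_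
    have he : Continuous[t, _]
        (fun μ : FiniteMeasure α => ((μ.mass, nrm x₀ μ) : ℝ≥0 × ProbabilityMeasure α)) :=
      continuous_induced_dom
    have h₁ : Continuous[t, _] (fun μ : FiniteMeasure α => μ.mass) := by
      exact continuous_fst.comp he
    have h₂ : Continuous[t, _]
        (fun μ : FiniteMeasure α => (nrm x₀ μ).toFiniteMeasure.testAgainstNN f) := by
      exact (ProbabilityMeasure.continuous_testAgainstNN_eval f).comp (continuous_snd.comp he)
    have key : (fun μ : FiniteMeasure α => μ.testAgainstNN f)
        = fun μ => (1 + μ.mass) * ((nrm x₀ μ).toFiniteMeasure.testAgainstNN f) - f x₀ :=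
      funext fun μ => testAgainstNN_eq_nrm x₀ μ f
    show Continuous[t, _] fun μ : FiniteMeasure α => μ.testAgainstNN f
    exact key ▸ ((continuous_const.add h₁).mul h₂).sub continuous_const

lemma pseudoMetrizable_finiteMeasure [PseudoMetrizableSpace α] [SeparableSpace α] :
    PseudoMetrizableSpace (FiniteMeasure α) := by
  rcases isEmpty_or_nonempty α with h | h
  · haveI : Subsingleton (FiniteMeasure α) := ⟨fun μ ν => by
      apply Subtype.ext
      ext s hs
      simp [Set.eq_empty_of_isEmpty s]⟩
    letI m : PseudoMetricSpace (FiniteMeasure α) :=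
      PseudoMetricSpace.induced (fun _ => ()) inferInstance
    exact ⟨⟨m.toUniformSpace, topologies_eq_of_subsingleton _ _, inferInstance⟩⟩
  · obtain ⟨x₀⟩ := h
    exact (isInducing_nrm x₀).pseudoMetrizableSpace

end Nrm

section Signed

open MeasureTheory

variable {α : Type*} [TopologicalSpace α] [MeasurableSpace α]

lemma posPart_add_eq (a b : Measure α) [IsFiniteMeasure a] [IsFiniteMeasure b] :
    (a.toSignedMeasure - b.toSignedMeasure).toJordanDecomposition.posPart + b
      = (a.toSignedMeasure - b.toSignedMeasure).toJordanDecomposition.negPart + a := by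
  set s := a.toSignedMeasure - b.toSignedMeasure with hs
  have h : s.toJordanDecomposition.posPart.toSignedMeasure
      - s.toJordanDecomposition.negPart.toSignedMeasure
      = a.toSignedMeasure - b.toSignedMeasure := s.toSignedMeasure_toJordanDecomposition
  rw [← Measure.toSignedMeasure_eq_toSignedMeasure_iff, Measure.toSignedMeasure_add,
    Measure.toSignedMeasure_add]
  exact (sub_eq_sub_iff_add_eq_add.mp h).trans (add_comm _ _)

lemma sPair_sub_eq [OpensMeasurableSpace α] (a b : FiniteMeasure α)
    (f : BoundedContinuousFunction α ℝ) :
    sPair (a.toMeasure.toSignedMeasure - b.toMeasure.toSignedMeasure) f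
      = (∫ x, f x ∂(a : Measure α)) - ∫ x, f x ∂(b : Measure α) := by
  have key := posPart_add_eq a.toMeasure b.toMeasure
  have h := congrArg (fun m : Measure α => ∫ x, f x ∂m) key
  rw [integral_add_measure (f.integrable _) (f.integrable _),
    integral_add_measure (f.integrable _) (f.integrable _)] at h
  unfold sPair
  linarith

lemma signed_eq_of_sPair [BorelSpace α] [TopologicalSpace.PseudoMetrizableSpace α]
    (μ ν : SignedMeasure α)
    (h : ∀ f : BoundedContinuousFunction α ℝ, sPair μ f = sPair ν f) : μ = ν := by
  set p1 := μ.toJordanDecomposition.posPart with hp1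
  set n1 := μ.toJordanDecomposition.negPart with hn1
  set p2 := ν.toJordanDecomposition.posPart with hp2
  set n2 := ν.toJordanDecomposition.negPart with hn2
  have key : p1 + n2 = p2 + n1 := by
    apply ext_of_forall_lintegral_eq_of_IsFiniteMeasure
    intro g
    have lip : LipschitzWith 1 ((↑) : ℝ≥0 → ℝ) := isometry_subtype_coe.lipschitz
    set f : BoundedContinuousFunction α ℝ := BoundedContinuousFunction.comp _ lip g with hf
    have hg : ∀ (m : Measure α) [IsFiniteMeasure m],
        (∫⁻ x, (g x : ℝ≥0∞) ∂m).toReal = ∫ x, f x ∂m := fun m _ =>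
      BoundedContinuousFunction.toReal_lintegral_coe_eq_integral g m
    have hsp := h f
    unfold sPair at hsp
    rw [lintegral_add_measure, lintegral_add_measure]
    refine (ENNReal.toReal_eq_toReal_iff' ?_ ?_).mp ?_
    · exact ENNReal.add_ne_top.mpr
        ⟨(g.lintegral_lt_top_of_nnreal _).ne, (g.lintegral_lt_top_of_nnreal _).ne⟩
    · exact ENNReal.add_ne_top.mpr
        ⟨(g.lintegral_lt_top_of_nnreal _).ne, (g.lintegral_lt_top_of_nnreal _).ne⟩
    · rw [ENNReal.toReal_add (g.lintegral_lt_top_of_nnreal _).ne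
          (g.lintegral_lt_top_of_nnreal _).ne,
        ENNReal.toReal_add (g.lintegral_lt_top_of_nnreal _).ne
          (g.lintegral_lt_top_of_nnreal _).ne, hg p1, hg n2, hg p2, hg n1]
      linarith
  have h3 : p1.toSignedMeasure + n2.toSignedMeasure
      = p2.toSignedMeasure + n1.toSignedMeasure := by
    rw [← Measure.toSignedMeasure_add, ← Measure.toSignedMeasure_add]
    exact Measure.toSignedMeasure_congr key
  have hμ : μ = p1.toSignedMeasure - n1.toSignedMeasure :=
    (μ.toSignedMeasure_toJordanDecomposition).symm
  have hν : ν = p2.toSignedMeasure - n2.toSignedMeasure :=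
    (ν.toSignedMeasure_toJordanDecomposition).symm
  rw [hμ, hν, sub_eq_sub_iff_add_eq_add]
  exact h3

end Signed

/-- the space of finite signed Borel measures with the quotient topology
`T` is a k-space: a set `A` is `T`-closed iff `A ∩ K` is `T`-closed for every
`T`-compact `K`. -/
theorem stmt_3 {X : Type*} [TopologicalSpace X] [MeasurableSpace X] [BorelSpace X]
    [MetrizableSpace X] [SeparableSpace X] (A : Set (SignedMeasure X)) :
    @IsClosed _ (TTop X) A ↔
      ∀ K : Set (SignedMeasure X), @IsCompact _ (TTop X) K →
        @IsClosed _ (TTop X) (A ∩ K) := by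
  
  haveI : TopologicalSpace.PseudoMetrizableSpace (FiniteMeasure X) := pseudoMetrizable_finiteMeasure
  letI tS : TopologicalSpace (SignedMeasure X) := TTop X
  haveI cg : CompactlyGeneratedSpace (SignedMeasure X) :=
    compactlyGeneratedSpace_of_coinduced (f := qMap X) continuous_coinduced_rng rfl
  haveI t2 : T2Space (SignedMeasure X) := by
    refine T2Space.of_injective_continuous
      (f := fun (μ : SignedMeasure X) (f : BoundedContinuousFunction X ℝ) => sPair μ f) ?_ ?_
    · intro μ ν hμν
      exact signed_eq_of_sPair μ ν fun f => congrFun hμν f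
    · have hcomp : Continuous
          ((fun (μ : SignedMeasure X) (f : BoundedContinuousFunction X ℝ) => sPair μ f)
            ∘ qMap X) := by
        apply continuous_pi
        intro f
        simp only [Function.comp, qMap, sPair_sub_eq]
        exact ((FiniteMeasure.continuous_integral_boundedContinuousFunction f).comp
          continuous_fst).sub
          ((FiniteMeasure.continuous_integral_boundedContinuousFunction f).comp continuous_snd)
      exact continuous_coinduced_dom.mpr hcomp
  exact CompactlyGeneratedSpace.isClosed_iff_of_t2 A
end

section
/- Let X be a separable metrizable topological space. Then every σ-compact subset K of M (the space of finite signed Borel measures on X) is metrizable in the subspace topology induced by the weak topology σ. -/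
open MeasureTheory TopologicalSpace Topology

section AuxiliaryLemmas

open Set Filter
open scoped NNReal ENNReal

variable {X : Type*} [TopologicalSpace X] [MeasurableSpace X]

/-- The real-valued bounded continuous function associated to an `ℝ≥0`-valued one. -/
noncomputable def nnToReal (f : BoundedContinuousFunction X ℝ≥0) :
    BoundedContinuousFunction X ℝ :=
  BoundedContinuousFunction.comp _ isometry_subtype_coe.lipschitz f

omit [MeasurableSpace X] in
lemma nnToReal_apply (f : BoundedContinuousFunction X ℝ≥0) (x : X) :
    nnToReal f x = (f x : ℝ) := rfl

/-- On a separable metrizable space there is a countable family of bounded continuous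
functions whose integrals determine finite Borel measures. -/
lemma exists_separating [BorelSpace X] [MetrizableSpace X] [SeparableSpace X] :
    ∃ g : ℕ → BoundedContinuousFunction X ℝ,
      ∀ (μ ν : Measure X), IsFiniteMeasure μ → IsFiniteMeasure ν →
        (∀ n, ∫ x, g n x ∂μ = ∫ x, g n x ∂ν) → μ = ν := by
  letI : MetricSpace X := TopologicalSpace.metrizableSpaceMetric X
  haveI : SecondCountableTopology X := UniformSpace.secondCountable_of_separable X
  obtain ⟨B, hBc, -, hB⟩ := exists_countable_basis X
  set 𝒟 : Set (Set X) := (fun t => (⋃₀ t)ᶜ) '' {t | t.Finite ∧ t ⊆ B} with h𝒟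
  have h𝒟c : 𝒟.Countable := (Set.countable_setOf_finite_subset hBc).image _
  have huniv : Set.univ ∈ 𝒟 := ⟨∅, ⟨finite_empty, empty_subset _⟩, by simp⟩
  obtain ⟨e, he⟩ := h𝒟c.exists_eq_range ⟨_, huniv⟩
  have hmem : ∀ k, e k ∈ 𝒟 := fun k => he ▸ mem_range_self k
  have hcl : ∀ k, IsClosed (e k) := by
    intro k
    obtain ⟨t, ⟨htf, htB⟩, ht⟩ := hmem k
    rw [← ht]
    exact (isOpen_sUnion fun U hU => hB.isOpen (htB hU)).isClosed_compl
  refine ⟨fun n => nnToReal ((hcl n.unpair.1).apprSeq n.unpair.2), ?_⟩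
  intro μ ν hμ hν h
  haveI := hμ; haveI := hν
  have hlin : ∀ k m, ∫⁻ x, ((hcl k).apprSeq m x : ℝ≥0∞) ∂μ
      = ∫⁻ x, ((hcl k).apprSeq m x : ℝ≥0∞) ∂ν := by
    intro k m
    have hh := h (Nat.pair k m)
    simp only [Nat.unpair_pair, nnToReal_apply] at hh
    have hμ' := BoundedContinuousFunction.toReal_lintegral_coe_eq_integral
      ((hcl k).apprSeq m) μ
    have hν' := BoundedContinuousFunction.toReal_lintegral_coe_eq_integral
      ((hcl k).apprSeq m) ν
    have : (∫⁻ x, ((hcl k).apprSeq m x : ℝ≥0∞) ∂μ).toReal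
        = (∫⁻ x, ((hcl k).apprSeq m x : ℝ≥0∞) ∂ν).toReal := by
      rw [hμ', hν']; exact hh
    exact (ENNReal.toReal_eq_toReal_iff'
      (BoundedContinuousFunction.lintegral_lt_top_of_nnreal μ _).ne
      (BoundedContinuousFunction.lintegral_lt_top_of_nnreal ν _).ne).mp this
  have hD : ∀ F ∈ 𝒟, μ F = ν F := by
    intro F hF
    rw [he] at hF
    obtain ⟨k, rfl⟩ := hF
    have h1 := HasOuterApproxClosed.tendsto_lintegral_apprSeq (hcl k) μ
    have h2 := HasOuterApproxClosed.tendsto_lintegral_apprSeq (hcl k) ν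
    simp_rw [hlin k] at h1
    exact tendsto_nhds_unique h1 h2
  refine ext_of_generate_finite 𝒟 ?_ ?_ hD (hD _ huniv)
  · rw [BorelSpace.measurable_eq (α := X), hB.borel_eq_generateFrom]
    apply le_antisymm
    · refine MeasurableSpace.generateFrom_le fun U hU => ?_
      have hmem' : (⋃₀ {U})ᶜ ∈ 𝒟 :=
        ⟨{U}, ⟨finite_singleton U, singleton_subset_iff.mpr hU⟩, rfl⟩
      have := (MeasurableSpace.measurableSet_generateFrom hmem').compl
      simpa using this
    · refine MeasurableSpace.generateFrom_le ?_
      rintro _ ⟨t, ⟨htf, htB⟩, rfl⟩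
      exact (htf.measurableSet_sUnion fun U hU =>
        MeasurableSpace.measurableSet_generateFrom (htB hU)).compl
  · rintro _ ⟨t, ⟨htf, htB⟩, rfl⟩ _ ⟨s, ⟨hsf, hsB⟩, rfl⟩ -
    exact ⟨t ∪ s, ⟨htf.union hsf, union_subset htB hsB⟩,
      by simp only [sUnion_union, compl_union]⟩

/-- If a countable family of bounded continuous functions determines finite measures, then the
pairings `sPair` against this family determine finite signed measures. -/
lemma signed_eq_of_sPair_s5 [OpensMeasurableSpace X] {g : ℕ → BoundedContinuousFunction X ℝ}
    (hg : ∀ (μ ν : Measure X), IsFiniteMeasure μ → IsFiniteMeasure ν →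
        (∀ n, ∫ x, g n x ∂μ = ∫ x, g n x ∂ν) → μ = ν)
    {μ ν : SignedMeasure X} (h : ∀ n, sPair μ (g n) = sPair ν (g n)) : μ = ν := by
  have key : μ.toJordanDecomposition.posPart + ν.toJordanDecomposition.negPart
      = ν.toJordanDecomposition.posPart + μ.toJordanDecomposition.negPart := by
    apply hg _ _ inferInstance inferInstance
    intro n
    have hn := h n
    simp only [sPair] at hn
    rw [integral_add_measure ((g n).integrable _) ((g n).integrable _),
        integral_add_measure ((g n).integrable _) ((g n).integrable _)]
    linarith
  have hJ : ∀ j : JordanDecomposition X,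
      j.toSignedMeasure = j.posPart.toSignedMeasure - j.negPart.toSignedMeasure :=
    fun _ => rfl
  calc μ = μ.toJordanDecomposition.toSignedMeasure :=
        (μ.toSignedMeasure_toJordanDecomposition).symm
    _ = ν.toJordanDecomposition.toSignedMeasure := by
        have haux : ∀ (m₁ m₂ : Measure X) (h₁ : IsFiniteMeasure m₁)
            (h₂ : IsFiniteMeasure m₂), m₁ = m₂ →
            @Measure.toSignedMeasure _ _ m₁ h₁ = @Measure.toSignedMeasure _ _ m₂ h₂ := by
          rintro m _ h₁ h₂ rfl; rfl
        rw [hJ, hJ, sub_eq_sub_iff_add_eq_add, ← Measure.toSignedMeasure_add,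
          ← Measure.toSignedMeasure_add]
        exact haux _ _ _ _ key
    _ = ν := ν.toSignedMeasure_toJordanDecomposition

lemma metrizable_nat_pi : MetrizableSpace (ℕ → ℝ) :=
  inferInstance

end AuxiliaryLemmas

/-- every `σ`-compact subset of the space of finite signed Borel measures
is metrizable in the subspace topology induced by the weak topology `σ`. -/
theorem stmt_5 {X : Type*} [TopologicalSpace X] [MeasurableSpace X] [BorelSpace X]
    [MetrizableSpace X] [SeparableSpace X] (K : Set (SignedMeasure X))
    (hK : @IsCompact _ (sigmaTop X) K) :
    @MetrizableSpace K
      (TopologicalSpace.induced (Subtype.val : K → SignedMeasure X) (sigmaTop X)) := by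
  letI : TopologicalSpace (SignedMeasure X) := sigmaTop X
  haveI : CompactSpace K := isCompact_iff_compactSpace.mp hK
  haveI : MetrizableSpace (ℕ → ℝ) := metrizable_nat_pi
  obtain ⟨g, hg⟩ := exists_separating (X := X)
  set Φ : K → (ℕ → ℝ) := fun μ n => sPair μ.1 (g n) with hΦ
  have hcont : Continuous Φ := by
    apply continuous_pi
    intro n
    have h1 : Continuous (fun ρ : SignedMeasure X => sPair ρ (g n)) := by
      rw [continuous_iff_le_induced]
      exact iInf_le _ (g n)
    exact h1.comp continuous_subtype_val
  have hinj : Function.Injective Φ := by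
    intro μ ν hμν
    apply Subtype.ext
    exact signed_eq_of_sPair_s5 hg (fun n => congrFun hμν n)
  exact (hcont.isClosedEmbedding hinj).isEmbedding.metrizableSpace
end
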